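/- Let γ > 0 and let a1, a2, a3 be nonnegative, pairwise distinct real numbers, and let L = γ( a1 · σ1⊗σ1 + a2 · σ2ᵀ⊗σ2 + a3 · σ3⊗σ3 − (a1+a2+a3) · I₄ ). Let A, B, C, D ∈ ℝ and let Q = !![A, C + iD; C − iD, B] ∈ M₂(ℂ). Then the four vectors vec(I₂), vec(Q), L† vec(Q), (L†)² vec(Q) in ℂ⁴ are linearly independent if and only if A ≠ B, C ≠ 0 and D ≠ 0. -/

import Mathlib

open Matrix Complex Kronecker

noncomputable section

/-- The Pauli matrices. -/
def pauli1 : Matrix (Fin 2) (Fin 2) ℂ := !![0, 1; 1, 0]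
def pauli2 : Matrix (Fin 2) (Fin 2) ℂ := !![0, -I; I, 0]
def pauli3 : Matrix (Fin 2) (Fin 2) ℂ := !![1, 0; 0, -1]

/-- The generator of evolution
`L = γ( a1 σ1⊗σ1 + a2 σ2ᵀ⊗σ2 + a3 σ3⊗σ3 − (a1+a2+a3) I₄ )`. -/
def gen2 (γ a1 a2 a3 : ℝ) : Matrix (Fin 2 × Fin 2) (Fin 2 × Fin 2) ℂ :=
  (γ : ℂ) • ((a1 : ℂ) • (pauli1 ⊗ₖ pauli1) + (a2 : ℂ) • (pauli2ᵀ ⊗ₖ pauli2)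
    + (a3 : ℂ) • (pauli3 ⊗ₖ pauli3)
    - ((a1 + a2 + a3 : ℝ) : ℂ) • (1 : Matrix (Fin 2 × Fin 2) (Fin 2 × Fin 2) ℂ))

/-- Column-stacking vectorization `vec : M₂(ℂ) → ℂ⁴`, indexed so that
`vec(XYZ) = (Zᵀ ⊗ X) vec(Y)`: the entry of `vec M` at `(j, i)` is `M i j`. -/
def vec2 (M : Matrix (Fin 2) (Fin 2) ℂ) : Fin 2 × Fin 2 → ℂ := fun p => M p.2 p.1

/-- Auxiliary equivalence `Fin 4 ≃ Fin 2 × Fin 2`. -/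
def e4 : Fin 4 ≃ Fin 2 × Fin 2 where
  toFun := ![(0,0),(0,1),(1,0),(1,1)]
  invFun := fun p => ![![0,1],![2,3]] p.1 p.2
  left_inv := by decide
  right_inv := by decide


set_option maxHeartbeats 3000000 in
lemma hN_aux (γ a1 a2 a3 A B C D : ℝ) :
    ((Matrix.of fun p q => (![vec2 (1 : Matrix (Fin 2) (Fin 2) ℂ),
        vec2 !![(A : ℂ), (C : ℂ) + (D : ℂ) * I; (C : ℂ) - (D : ℂ) * I, (B : ℂ)],
        (gen2 γ a1 a2 a3)ᴴ.mulVec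
          (vec2 !![(A : ℂ), (C : ℂ) + (D : ℂ) * I; (C : ℂ) - (D : ℂ) * I, (B : ℂ)]),
        (gen2 γ a1 a2 a3)ᴴ.mulVec ((gen2 γ a1 a2 a3)ᴴ.mulVec
          (vec2 !![(A : ℂ), (C : ℂ) + (D : ℂ) * I; (C : ℂ) - (D : ℂ) * I, (B : ℂ)]))]
       : Fin 4 → (Fin 2 × Fin 2 → ℂ)) (e4.symm p) q).submatrix ⇑e4 ⇑e4)
      = !![1, 0, 0, 1;
           (A:ℂ), (C:ℂ)-(D:ℂ)*I, (C:ℂ)+(D:ℂ)*I, (B:ℂ);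
           (γ:ℂ)*((a1:ℂ)+a2)*((B:ℂ)-A), -2*(γ:ℂ)*(((a2:ℂ)+a3)*C - ((a1:ℂ)+a3)*D*I),
             -2*(γ:ℂ)*(((a2:ℂ)+a3)*C + ((a1:ℂ)+a3)*D*I), -((γ:ℂ)*((a1:ℂ)+a2)*((B:ℂ)-A));
           2*(γ:ℂ)^2*((a1:ℂ)+a2)^2*((A:ℂ)-B), 4*(γ:ℂ)^2*(((a2:ℂ)+a3)^2*C - ((a1:ℂ)+a3)^2*D*I),
             4*(γ:ℂ)^2*(((a2:ℂ)+a3)^2*C + ((a1:ℂ)+a3)^2*D*I), 2*(γ:ℂ)^2*((a1:ℂ)+a2)^2*((B:ℂ)-A)] := by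
  ext i j
  fin_cases i <;> fin_cases j <;>
  · simp only [Matrix.submatrix_apply, Matrix.of_apply, Equiv.symm_apply_apply, e4,
      Equiv.coe_fn_mk, vec2, gen2, pauli1, pauli2, pauli3, Matrix.mulVec,
      dotProduct, Fintype.sum_prod_type, Fin.sum_univ_two,
      Matrix.conjTranspose_apply, Matrix.smul_apply, Matrix.add_apply,
      Matrix.sub_apply, Matrix.one_apply, Matrix.kroneckerMap_apply,
      Matrix.transpose_apply, smul_eq_mul, Prod.mk.injEq, _root_.map_mul,
      _root_.map_add, _root_.map_sub, Complex.conj_ofReal, _root_.map_one,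
      Complex.conj_I, Matrix.cons_val', Matrix.cons_val_zero, Matrix.cons_val_one,
      Matrix.head_cons, Matrix.head_fin_const, Matrix.cons_val_fin_one,
      Matrix.cons_val_two, Matrix.cons_val_three, Matrix.tail_cons, Fin.reduceFinMk, Matrix.cons_val, Equiv.coe_fn_symm_mk]
    all_goals norm_num [Prod.ext_iff, Fin.ext_iff]
    try ring

set_option maxHeartbeats 3000000 in
lemma hdet_aux (γ a1 a2 a3 A B C D : ℝ) :
    (!![1, 0, 0, 1;
           (A:ℂ), (C:ℂ)-(D:ℂ)*I, (C:ℂ)+(D:ℂ)*I, (B:ℂ);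
           (γ:ℂ)*((a1:ℂ)+a2)*((B:ℂ)-A), -2*(γ:ℂ)*(((a2:ℂ)+a3)*C - ((a1:ℂ)+a3)*D*I),
             -2*(γ:ℂ)*(((a2:ℂ)+a3)*C + ((a1:ℂ)+a3)*D*I), -((γ:ℂ)*((a1:ℂ)+a2)*((B:ℂ)-A));
           2*(γ:ℂ)^2*((a1:ℂ)+a2)^2*((A:ℂ)-B), 4*(γ:ℂ)^2*(((a2:ℂ)+a3)^2*C - ((a1:ℂ)+a3)^2*D*I),
             4*(γ:ℂ)^2*(((a2:ℂ)+a3)^2*C + ((a1:ℂ)+a3)^2*D*I), 2*(γ:ℂ)^2*((a1:ℂ)+a2)^2*((B:ℂ)-A)]).det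
      = (16 * I * (γ:ℂ)^3 * ((a1:ℂ)-a2) * ((a2:ℂ)-a3) * ((a3:ℂ)-a1))
          * (((B:ℂ)-A) * C * D) := by
  simp only [Matrix.det_succ_row_zero, Fin.sum_univ_succ, Finset.univ_unique,
    Finset.sum_singleton, Matrix.det_unique, Fin.default_eq_zero, Matrix.submatrix_apply,
    Fin.succ_zero_eq_one, Fin.succ_one_eq_two, Matrix.submatrix_submatrix,
    Function.comp, Fin.succAbove_zero, Matrix.cons_val', Matrix.cons_val_zero,
    Matrix.cons_val_one, Matrix.head_cons, Matrix.head_fin_const, Matrix.cons_val_fin_one,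
    Matrix.cons_val_succ, Fin.succ, Fin.castSucc, Fin.castAdd, Fin.castLE,
    Matrix.cons_val_two, Matrix.cons_val_three, Matrix.tail_cons, Fin.succAbove,
    Fin.lt_def, Matrix.det_fin_one, Matrix.of_apply]
  norm_num
  ring

set_option maxHeartbeats 1000000 in
/-- for `γ > 0`, nonnegative pairwise-distinct parameters, and the
observable `Q = !![A, C + iD; C − iD, B]`, the vectors
`vec I₂, vec Q, L† vec Q, (L†)² vec Q` are linearly independent iff
`A ≠ B`, `C ≠ 0` and `D ≠ 0`. -/
theorem observable_tomography_condition (γ a1 a2 a3 : ℝ) (hγ : 0 < γ)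
    (h1 : 0 ≤ a1) (h2 : 0 ≤ a2) (h3 : 0 ≤ a3)
    (h12 : a1 ≠ a2) (h13 : a1 ≠ a3) (h23 : a2 ≠ a3)
    (A B C D : ℝ) :
    LinearIndependent ℂ
      ![vec2 (1 : Matrix (Fin 2) (Fin 2) ℂ),
        vec2 !![(A : ℂ), (C : ℂ) + (D : ℂ) * I; (C : ℂ) - (D : ℂ) * I, (B : ℂ)],
        (gen2 γ a1 a2 a3)ᴴ.mulVec
          (vec2 !![(A : ℂ), (C : ℂ) + (D : ℂ) * I; (C : ℂ) - (D : ℂ) * I, (B : ℂ)]),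
        (gen2 γ a1 a2 a3)ᴴ.mulVec ((gen2 γ a1 a2 a3)ᴴ.mulVec
          (vec2 !![(A : ℂ), (C : ℂ) + (D : ℂ) * I; (C : ℂ) - (D : ℂ) * I, (B : ℂ)]))]
      ↔ (A ≠ B ∧ C ≠ 0 ∧ D ≠ 0) := by
  rw [← linearIndependent_equiv e4.symm,
    show ((![vec2 (1 : Matrix (Fin 2) (Fin 2) ℂ),
        vec2 !![(A : ℂ), (C : ℂ) + (D : ℂ) * I; (C : ℂ) - (D : ℂ) * I, (B : ℂ)],
        (gen2 γ a1 a2 a3)ᴴ.mulVec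
          (vec2 !![(A : ℂ), (C : ℂ) + (D : ℂ) * I; (C : ℂ) - (D : ℂ) * I, (B : ℂ)]),
        (gen2 γ a1 a2 a3)ᴴ.mulVec ((gen2 γ a1 a2 a3)ᴴ.mulVec
          (vec2 !![(A : ℂ), (C : ℂ) + (D : ℂ) * I; (C : ℂ) - (D : ℂ) * I, (B : ℂ)]))]
       : Fin 4 → (Fin 2 × Fin 2 → ℂ)) ∘ ⇑e4.symm)
      = Matrix.row (Matrix.of fun p q => (![vec2 (1 : Matrix (Fin 2) (Fin 2) ℂ),
        vec2 !![(A : ℂ), (C : ℂ) + (D : ℂ) * I; (C : ℂ) - (D : ℂ) * I, (B : ℂ)],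
        (gen2 γ a1 a2 a3)ᴴ.mulVec
          (vec2 !![(A : ℂ), (C : ℂ) + (D : ℂ) * I; (C : ℂ) - (D : ℂ) * I, (B : ℂ)]),
        (gen2 γ a1 a2 a3)ᴴ.mulVec ((gen2 γ a1 a2 a3)ᴴ.mulVec
          (vec2 !![(A : ℂ), (C : ℂ) + (D : ℂ) * I; (C : ℂ) - (D : ℂ) * I, (B : ℂ)]))]
       : Fin 4 → (Fin 2 × Fin 2 → ℂ)) (e4.symm p) q) from rfl,
    Matrix.linearIndependent_rows_iff_isUnit, Matrix.isUnit_iff_isUnit_det,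
    isUnit_iff_ne_zero, ← Matrix.det_submatrix_equiv_self e4]
  have hN := hN_aux γ a1 a2 a3 A B C D
  rw [hN]
  have hdet := hdet_aux γ a1 a2 a3 A B C D
  rw [hdet]
  have hγ' : (γ:ℂ) ≠ 0 := by exact_mod_cast hγ.ne'
  have e12 : ((a1:ℂ) - a2) ≠ 0 := sub_ne_zero.mpr (by exact_mod_cast h12)
  have e23 : ((a2:ℂ) - a3) ≠ 0 := sub_ne_zero.mpr (by exact_mod_cast h23)
  have e31 : ((a3:ℂ) - a1) ≠ 0 := sub_ne_zero.mpr (by exact_mod_cast h13.symm)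
  have hc : (16 * I * (γ:ℂ)^3 * ((a1:ℂ)-a2) * ((a2:ℂ)-a3) * ((a3:ℂ)-a1)) ≠ 0 := by
    refine mul_ne_zero (mul_ne_zero (mul_ne_zero (mul_ne_zero ?_ (pow_ne_zero _ hγ')) e12) e23) e31
    simp [Complex.I_ne_zero]
  constructor
  · intro h
    have h2' : ((B:ℂ)-A) * (C:ℂ) * (D:ℂ) ≠ 0 := fun hz => h (by rw [hz, mul_zero])
    rw [mul_ne_zero_iff, mul_ne_zero_iff] at h2'
    obtain ⟨⟨hBA, hC⟩, hD⟩ := h2'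
    refine ⟨fun h' => hBA (by rw [h', sub_self]), fun h' => hC (by exact_mod_cast h'),
      fun h' => hD (by exact_mod_cast h')⟩
  · rintro ⟨hAB, hC, hD⟩
    exact mul_ne_zero hc (mul_ne_zero (mul_ne_zero
      (sub_ne_zero.mpr (fun h => hAB (by exact_mod_cast h.symm)))
      (by exact_mod_cast hC)) (by exact_mod_cast hD))

end
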